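/- The bilinear form b_λ is symmetric: b_λ(x,y) = b_λ(y,x) for all x, y ∈ P_𝒬(λ). -/

import Mathlib

/-!
Path model `P_𝒬(λ)`: the `ℚ(v)`-vector space with basis the simple root paths (lists in
`Pi`), with operators `ε_α`, `φ_α`, and the bilinear form `b_λ` defined on basis paths by
`b_λ(δ,γ) = 0` if `ht(δ) ≠ ht(γ)` and `b_λ(δ,γ) = ε_{δʳ}(γ)` (coefficient of the empty
path) if `ht(δ) = ht(γ)`.

STATEMENT: `b_λ` is symmetric: `b_λ(x,y) = b_λ(y,x)` for all `x, y ∈ P_𝒬(λ)`.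
-/

noncomputable section

/-- `𝒵 = ℤ[v,v⁻¹]` realized as a subalgebra of `𝒬 = ℚ(v)`. -/
def ZZ : Subalgebra ℤ (RatFunc ℚ) := Algebra.adjoin ℤ {RatFunc.X, RatFunc.X⁻¹}

/-- The quantum integer `[n]_{v^d}` in `ℚ(v)`. -/
def qd (d : ℕ) (n : ℤ) : RatFunc ℚ :=
  (RatFunc.X ^ ((d : ℤ) * n) - RatFunc.X ^ (-((d : ℤ) * n))) /
    (RatFunc.X ^ (d : ℤ) - RatFunc.X ^ (-(d : ℤ)))

/-- The quantum factorial `[r]!_{v^d}`. -/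
def qfacd (d r : ℕ) : RatFunc ℚ := ∏ i ∈ Finset.range r, qd d ((i : ℤ) + 1)

/-- The quantum binomial coefficient `qbinom(n,r)` in the variable `v^d`. -/
def qbinomd (d : ℕ) (n : ℤ) (r : ℕ) : RatFunc ℚ :=
  (∏ i ∈ Finset.range r, qd d (n - (i : ℤ))) / qfacd d r

variable {X : Type*} [AddCommGroup X] {Pi : Type*} [DecidableEq Pi]

/-- The height of a path: the sum of its entries, as an element of the weight lattice. -/
def hgt (root : Pi → X) (δ : List Pi) : X := (δ.map root).sum

/-- The operator `φ_α`: prepending `α` to a path, extended linearly. -/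
def phiOp (α : Pi) : Module.End (RatFunc ℚ) (List Pi →₀ RatFunc ℚ) :=
  Finsupp.lmapDomain (RatFunc ℚ) (RatFunc ℚ) (List.cons α)

/-- `ε_α` on basis paths. -/
def epsB (root : Pi → X) (pair : Pi → X →+ ℤ) (dd : Pi → ℕ) (lam : X) (α : Pi) :
    List Pi → (List Pi →₀ RatFunc ℚ)
  | [] => 0
  | β :: t =>
      (if β = α then Finsupp.single t (qd (dd α) (pair α (lam - hgt root t))) else 0)
        + Finsupp.mapDomain (List.cons β) (epsB root pair dd lam α t)

/-- The operator `ε_α`, the linear extension of `epsB`. -/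
def epsOp (root : Pi → X) (pair : Pi → X →+ ℤ) (dd : Pi → ℕ) (lam : X) (α : Pi) :
    Module.End (RatFunc ℚ) (List Pi →₀ RatFunc ℚ) :=
  Finsupp.linearCombination (RatFunc ℚ) (epsB root pair dd lam α)

/-- The divided power `ε_α^{[n]} = ε_α^n / [n]_α!`. -/
def epsDP (root : Pi → X) (pair : Pi → X →+ ℤ) (dd : Pi → ℕ) (lam : X) (α : Pi) (n : ℕ) :
    Module.End (RatFunc ℚ) (List Pi →₀ RatFunc ℚ) :=
  (qfacd (dd α) n)⁻¹ • (epsOp root pair dd lam α) ^ n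

/-- The divided power `φ_α^{[n]} = φ_α^n / [n]_α!`. -/
def phiDP (dd : Pi → ℕ) (α : Pi) (n : ℕ) :
    Module.End (RatFunc ℚ) (List Pi →₀ RatFunc ℚ) :=
  (qfacd (dd α) n)⁻¹ • (phiOp α) ^ n

/-- `ε_γ = ε_{γ₁} ∘ ⋯ ∘ ε_{γ_m}` for a path `γ`. -/
def epsPath (root : Pi → X) (pair : Pi → X →+ ℤ) (dd : Pi → ℕ) (lam : X) (γ : List Pi) :
    Module.End (RatFunc ℚ) (List Pi →₀ RatFunc ℚ) :=
  (γ.map (epsOp root pair dd lam)).prod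

/-- `φ_γ = φ_{γ₁} ∘ ⋯ ∘ φ_{γ_m}` for a path `γ`. -/
def phiPath (γ : List Pi) : Module.End (RatFunc ℚ) (List Pi →₀ RatFunc ℚ) :=
  (γ.map phiOp).prod

open Classical in
/-- The value `b_λ(δ,γ)` on basis paths. -/
def bentryQ (root : Pi → X) (pair : Pi → X →+ ℤ) (dd : Pi → ℕ) (lam : X) (δ γ : List Pi) :
    RatFunc ℚ :=
  if hgt root δ = hgt root γ then
    (epsPath root pair dd lam δ.reverse (Finsupp.single γ 1)) [] else 0

/-- The bilinear form `b_λ` on `P_𝒬(λ)`. -/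
def bformQ (root : Pi → X) (pair : Pi → X →+ ℤ) (dd : Pi → ℕ) (lam : X)
    (x y : List Pi →₀ RatFunc ℚ) : RatFunc ℚ :=
  x.sum fun δ cδ => y.sum fun γ cγ => cδ * cγ * bentryQ root pair dd lam δ γ

/-- Length of the initial run of `α`'s in a list. -/
def runLen (α : Pi) : List Pi → ℕ
  | [] => 0
  | β :: t => if β = α then runLen α t + 1 else 0

/-- The scalar `δ^!`, a product of quantum factorials of run lengths. -/
def pfact (dd : Pi → ℕ) : List Pi → RatFunc ℚ
  | [] => 1
  | α :: t => qd (dd α) ((runLen α t : ℤ) + 1) * pfact dd t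

/-- The normalized basis element `⟨δ⟩ = (1/δ^!)·δ`. -/
def nbasis (dd : Pi → ℕ) (δ : List Pi) : List Pi →₀ RatFunc ℚ :=
  (pfact dd δ)⁻¹ • Finsupp.single δ 1

/-- The lattice `P_𝒵(λ)`: the set of `𝒵`-linear combinations of the `⟨δ⟩`. -/
def latticeP (dd : Pi → ℕ) : Set (List Pi →₀ RatFunc ℚ) :=
  {x | ∃ (s : Finset (List Pi)) (c : List Pi → RatFunc ℚ),
      (∀ δ, c δ ∈ ZZ) ∧ x = ∑ δ ∈ s, c δ • nbasis dd δ}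

/-- The weight space `P_𝒬(λ)_μ`, spanned by the paths of height `λ - μ`. -/
def PQcomp (root : Pi → X) (lam μ : X) : Submodule (RatFunc ℚ) (List Pi →₀ RatFunc ℚ) :=
  Submodule.span (RatFunc ℚ)
    {p | ∃ δ : List Pi, hgt root δ = lam - μ ∧ p = Finsupp.single δ 1}



variable (root : Pi → X) (pair : Pi → X →+ ℤ) (dd : Pi → ℕ)


/-! ### Auxiliary development for symmetry of `b_λ`. -/

section SymmAux
variable (lam : X)

lemma hgt_nil : hgt root ([] : List Pi) = 0 := rfl

lemma hgt_cons (β : Pi) (t : List Pi) : hgt root (β :: t) = root β + hgt root t := by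
  simp [hgt]

lemma hgt_reverse (δ : List Pi) : hgt root δ.reverse = hgt root δ := by
  simp only [hgt, List.map_reverse]
  exact List.sum_reverse _

lemma epsB_nil (α : Pi) : epsB root pair dd lam α ([] : List Pi) = 0 := rfl

lemma epsB_cons (α β : Pi) (t : List Pi) :
    epsB root pair dd lam α (β :: t) =
      (if β = α then Finsupp.single t (qd (dd α) (pair α (lam - hgt root t))) else 0)
        + Finsupp.mapDomain (List.cons β) (epsB root pair dd lam α t) := rfl

/-- Support lemma for `epsB`: lengths and heights. -/
lemma epsB_supp {α : Pi} : ∀ {γ η : List Pi},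
    epsB root pair dd lam α γ η ≠ 0 →
    η.length + 1 = γ.length ∧ hgt root η + root α = hgt root γ := by
  intro γ
  induction γ with
  | nil => intro η h; simp [epsB_nil] at h
  | cons β t ih =>
    intro η h
    rw [epsB_cons, Finsupp.add_apply] at h
    by_cases h1 :
        ((if β = α then Finsupp.single t (qd (dd α) (pair α (lam - hgt root t))) else 0) :
          List Pi →₀ RatFunc ℚ) η ≠ 0
    · by_cases hba : β = α
      · rw [if_pos hba] at h1
        have hηt : η = t := by
          by_contra hne
          exact h1 (Finsupp.single_eq_of_ne' (Ne.symm hne))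
        subst hηt; subst hba
        refine ⟨by simp, ?_⟩
        rw [hgt_cons]; abel
      · rw [if_neg hba] at h1; simp at h1
    · push_neg at h1
      have h2 : Finsupp.mapDomain (List.cons β) (epsB root pair dd lam α t) η ≠ 0 :=
        fun h2 => h (by rw [h1, h2, add_zero])
      have h1 := h2
      have hmem : η ∈ (Finsupp.mapDomain (List.cons β) (epsB root pair dd lam α t)).support :=
        Finsupp.mem_support_iff.mpr h1
      have := Finsupp.mapDomain_support hmem
      rcases Finset.mem_image.mp this with ⟨η', hη', rfl⟩
      obtain ⟨hl, hh⟩ := ih (Finsupp.mem_support_iff.mp hη')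
      refine ⟨by simp [← hl], ?_⟩
      rw [hgt_cons, hgt_cons, ← hh]; abel

/-- The submodule of elements supported on paths of height `h`. -/
def Hmod (h : X) : Submodule (RatFunc ℚ) (List Pi →₀ RatFunc ℚ) where
  carrier := {x | ∀ η, x η ≠ 0 → hgt root η = h}
  add_mem' := by
    intro a b ha hb η hη
    rw [Finsupp.add_apply] at hη
    by_cases h1 : a η = 0
    · exact hb η (by simpa [h1] using hη)
    · exact ha η h1
  zero_mem' := by intro η hη; simp at hη
  smul_mem' := by
    intro c a ha η hη
    rw [Finsupp.smul_apply] at hη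
    exact ha η fun h0 => hη (by simp [h0])

lemma single_mem_Hmod (γ : List Pi) :
    (Finsupp.single γ (1 : RatFunc ℚ)) ∈ Hmod root (hgt root γ) := by
  intro η hη
  by_contra hne
  have : η ≠ γ := fun h => hne (by rw [h])
  exact hη (Finsupp.single_eq_of_ne' (Ne.symm this))

lemma epsB_mem_Hmod {h : X} {γ : List Pi} (α : Pi) (hγ : hgt root γ = h) :
    epsB root pair dd lam α γ ∈ Hmod root (h - root α) := by
  intro η hη
  have := (epsB_supp root pair dd lam hη).2
  rw [hγ] at this
  exact eq_sub_of_add_eq this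

lemma epsOp_mem_Hmod {h : X} {x : List Pi →₀ RatFunc ℚ} (α : Pi) (hx : x ∈ Hmod root h) :
    epsOp root pair dd lam α x ∈ Hmod root (h - root α) := by
  rw [epsOp, Finsupp.linearCombination_apply, Finsupp.sum]
  refine Submodule.sum_mem _ fun γ hγ => Submodule.smul_mem _ _ ?_
  exact epsB_mem_Hmod root pair dd lam α (hx γ (Finsupp.mem_support_iff.mp hγ))

lemma epsPath_cons (α : Pi) (δ : List Pi) (x : List Pi →₀ RatFunc ℚ) :
    epsPath root pair dd lam (α :: δ) x
      = epsOp root pair dd lam α (epsPath root pair dd lam δ x) := by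
  simp [epsPath, Module.End.mul_apply]

lemma epsPath_mem_Hmod {h : X} {x : List Pi →₀ RatFunc ℚ} :
    ∀ (δ : List Pi), x ∈ Hmod root h →
      epsPath root pair dd lam δ x ∈ Hmod root (h - hgt root δ) := by
  intro δ hx
  induction δ with
  | nil =>
    have : epsPath root pair dd lam ([] : List Pi) x = x := by simp [epsPath]
    rw [this, hgt_nil, sub_zero]; exact hx
  | cons α δ ih =>
    rw [epsPath_cons]
    have := epsOp_mem_Hmod root pair dd lam α ih
    have he : h - hgt root δ - root α = h - hgt root (α :: δ) := by
      rw [hgt_cons]; abel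
    rwa [he] at this

/-- The linear functional computing the `[]`-coefficient of `ε_{δʳ}(·)`. -/
def Glin (δ : List Pi) : (List Pi →₀ RatFunc ℚ) →ₗ[RatFunc ℚ] RatFunc ℚ :=
  (Finsupp.lapply ([] : List Pi)) ∘ₗ (epsPath root pair dd lam δ.reverse)

/-- The bilinear form entry without the height condition. -/
def Fb (δ γ : List Pi) : RatFunc ℚ := Glin root pair dd lam δ (Finsupp.single γ 1)

lemma Fb_def (δ γ : List Pi) :
    Fb root pair dd lam δ γ
      = epsPath root pair dd lam δ.reverse (Finsupp.single γ 1) [] := rfl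

lemma Fb_ne_zero_hgt {δ γ : List Pi} (h : Fb root pair dd lam δ γ ≠ 0) :
    hgt root δ = hgt root γ := by
  have hm := epsPath_mem_Hmod root pair dd lam (x := Finsupp.single γ (1 : RatFunc ℚ))
    δ.reverse (single_mem_Hmod root γ)
  have h0 := hm [] h
  rw [hgt_nil, hgt_reverse] at h0
  exact (sub_eq_zero.mp h0.symm).symm

set_option synthInstance.maxHeartbeats 1000000 in
lemma Glin_single (δ γ : List Pi) (c : RatFunc ℚ) :
    Glin root pair dd lam δ (Finsupp.single γ c) = c * Fb root pair dd lam δ γ := by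
  have : Finsupp.single γ c = c • Finsupp.single γ (1 : RatFunc ℚ) := by
    rw [Finsupp.smul_single', mul_one]
  rw [this, map_smul, smul_eq_mul, Fb]

lemma Glin_apply (δ : List Pi) (x : List Pi →₀ RatFunc ℚ) :
    Glin root pair dd lam δ x = x.sum fun η c => c * Fb root pair dd lam δ η := by
  conv_lhs => rw [← Finsupp.sum_single x]
  rw [map_finsuppSum]
  exact Finsupp.sum_congr fun η _ => Glin_single root pair dd lam δ η _

lemma Fb_cons (α : Pi) (δ γ : List Pi) :
    Fb root pair dd lam (α :: δ) γ
      = Glin root pair dd lam δ (epsB root pair dd lam α γ) := by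
  rw [Fb, Glin, Glin, LinearMap.comp_apply, LinearMap.comp_apply, List.reverse_cons]
  congr 1
  have : epsPath root pair dd lam (δ.reverse ++ [α])
      = epsPath root pair dd lam δ.reverse * epsPath root pair dd lam [α] := by
    rw [epsPath, epsPath, epsPath, List.map_append, List.prod_append]
  rw [this, Module.End.mul_apply]
  congr 1
  have h1 : epsPath root pair dd lam [α] = epsOp root pair dd lam α := by
    simp [epsPath]
  rw [h1, epsOp, Finsupp.linearCombination_single, one_smul]

lemma Glin_mapDomain (δ : List Pi) (β : Pi) (x : List Pi →₀ RatFunc ℚ) :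
    Glin root pair dd lam δ (Finsupp.mapDomain (List.cons β) x)
      = x.sum fun η c => c * Fb root pair dd lam δ (β :: η) := by
  rw [Finsupp.mapDomain, map_finsuppSum]
  exact Finsupp.sum_congr fun η _ => Glin_single root pair dd lam δ _ _

lemma Fb_nil_left (γ : List Pi) :
    Fb root pair dd lam [] γ = if γ = [] then 1 else 0 := by
  rw [Fb_def]
  have : epsPath root pair dd lam (([] : List Pi).reverse) = 1 := by simp [epsPath]
  rw [this, Module.End.one_apply, Finsupp.single_apply]

lemma Fb_symm_aux : ∀ (n : ℕ) (δ γ : List Pi), δ.length + γ.length ≤ n →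
    Fb root pair dd lam δ γ = Fb root pair dd lam γ δ := by
  intro n
  induction n with
  | zero =>
    intro δ γ h
    have hδ : δ = [] := List.length_eq_zero_iff.mp (by omega)
    have hγ : γ = [] := List.length_eq_zero_iff.mp (by omega)
    rw [hδ, hγ]
  | succ n ih =>
    intro δ γ hlen
    match δ, γ with
    | [], [] => rfl
    | [], β :: t =>
      rw [Fb_nil_left, if_neg (List.cons_ne_nil β t), Fb_cons, epsB_nil, map_zero]
    | α :: s, [] =>
      rw [Fb_nil_left, if_neg (List.cons_ne_nil α s), Fb_cons, epsB_nil, map_zero]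
    | α :: s, β :: t =>
      have hst : s.length + t.length + 1 ≤ n := by
        simp only [List.length_cons] at hlen; omega
      rw [Fb_cons, Fb_cons, epsB_cons, epsB_cons, map_add, map_add,
        Glin_mapDomain, Glin_mapDomain]
      have hsum :
          ((epsB root pair dd lam α t).sum fun η c => c * Fb root pair dd lam s (β :: η))
            = (epsB root pair dd lam β s).sum fun ζ c => c * Fb root pair dd lam t (α :: ζ) := by
        have step1 :
            ((epsB root pair dd lam α t).sum fun η c => c * Fb root pair dd lam s (β :: η))
              = (epsB root pair dd lam α t).sum fun η cη =>
                  (epsB root pair dd lam β s).sum fun ζ cζ =>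
                    cη * (cζ * Fb root pair dd lam ζ η) := by
          refine Finsupp.sum_congr fun η hη => ?_
          have hηl := (epsB_supp root pair dd lam (Finsupp.mem_support_iff.mp hη)).1
          have h1 : Fb root pair dd lam s (β :: η) = Fb root pair dd lam (β :: η) s :=
            ih s (β :: η) (by simp only [List.length_cons]; omega)
          rw [h1, Fb_cons, Glin_apply, Finsupp.mul_sum]
          refine Finsupp.sum_congr fun ζ hζ => ?_
          have hζl := (epsB_supp root pair dd lam (Finsupp.mem_support_iff.mp hζ)).1
          have h2 : Fb root pair dd lam η ζ = Fb root pair dd lam ζ η :=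
            ih η ζ (by omega)
          rw [h2]
        have step2 :
            ((epsB root pair dd lam β s).sum fun ζ c => c * Fb root pair dd lam t (α :: ζ))
              = (epsB root pair dd lam β s).sum fun ζ cζ =>
                  (epsB root pair dd lam α t).sum fun η cη =>
                    cζ * (cη * Fb root pair dd lam ζ η) := by
          refine Finsupp.sum_congr fun ζ hζ => ?_
          have hζl := (epsB_supp root pair dd lam (Finsupp.mem_support_iff.mp hζ)).1
          have h1 : Fb root pair dd lam t (α :: ζ) = Fb root pair dd lam (α :: ζ) t :=
            ih t (α :: ζ) (by simp only [List.length_cons]; omega)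
          rw [h1, Fb_cons, Glin_apply, Finsupp.mul_sum]
        rw [step1, step2]
        simp only [Finsupp.sum]
        rw [Finset.sum_comm]
        refine Finset.sum_congr rfl fun ζ _ => ?_
        refine Finset.sum_congr rfl fun η _ => ?_
        ring
      rw [hsum]
      congr 1
      by_cases hab : β = α
      · subst hab
        rw [if_pos rfl, if_pos rfl, Glin_single, Glin_single]
        have hFb : Fb root pair dd lam s t = Fb root pair dd lam t s := ih s t (by omega)
        by_cases h0 : Fb root pair dd lam t s = 0
        · rw [hFb, h0, mul_zero, mul_zero]
        · have hh : hgt root t = hgt root s := Fb_ne_zero_hgt root pair dd lam h0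
          rw [hFb, hh]
      · rw [if_neg hab, if_neg (fun h => hab h.symm), map_zero, map_zero]

lemma bentryQ_eq_Fb (δ γ : List Pi) :
    bentryQ root pair dd lam δ γ = Fb root pair dd lam δ γ := by
  rw [bentryQ]
  split
  · rfl
  · next h =>
    by_contra hne
    exact h (Fb_ne_zero_hgt root pair dd lam fun h0 => hne (by rw [h0]))

lemma bentryQ_symm (δ γ : List Pi) :
    bentryQ root pair dd lam δ γ = bentryQ root pair dd lam γ δ := by
  rw [bentryQ_eq_Fb, bentryQ_eq_Fb]
  exact Fb_symm_aux root pair dd lam (δ.length + γ.length) δ γ le_rfl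

end SymmAux

theorem bform_symmetric
    (hd : ∀ α, dd α ∈ ({1, 2, 3} : Set ℕ))
    (hsym : ∀ α β, (dd α : ℤ) * pair α (root β) = (dd β : ℤ) * pair β (root α))
    (hpairself : ∀ α, pair α (root α) = 2)
    (lam : X) (x y : List Pi →₀ RatFunc ℚ) :
    bformQ root pair dd lam x y = bformQ root pair dd lam y x := by
  rw [bformQ, bformQ]
  simp only [Finsupp.sum]
  rw [Finset.sum_comm]
  refine Finset.sum_congr rfl fun γ _ => Finset.sum_congr rfl fun δ _ => ?_
  rw [bentryQ_symm root pair dd lam δ γ]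
  ring

end
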